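/- Suppose s₁, s₂ ∈ ℝ[t] satisfy s₁ − s₂ = t and let A be a real symmetric matrix. If s₁ is a sum of squares of polynomials and tr(s₂(A)) ≤ ε for all ε > 0 (i.e., tr(s₂(A)) ≤ 0), and s₂ is a sum of squares, then A is positive semidefinite. -/

import Mathlib

open Matrix Polynomial

lemma aux_aeval_isSymm {k : ℕ} {A : Matrix (Fin k) (Fin k) ℝ} (hA : A.IsSymm)
    (p : Polynomial ℝ) : (Polynomial.aeval A p).IsSymm := by
  induction p using Polynomial.induction_on' with
  | add p q hp hq =>
    simp only [map_add]
    exact hp.add hq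
  | monomial n a =>
    rw [Polynomial.aeval_monomial, Algebra.algebraMap_eq_smul_one]
    unfold Matrix.IsSymm
    rw [Matrix.transpose_mul, Matrix.transpose_pow, hA, Matrix.transpose_smul,
      Matrix.transpose_one, Matrix.smul_mul, Matrix.one_mul, Matrix.mul_smul,
      Matrix.mul_one]

lemma aux_trace_sq {k : ℕ} (B : Matrix (Fin k) (Fin k) ℝ) (hB : B.IsSymm) :
    (B * B).trace = ∑ i, ∑ j, (B i j)^2 := by
  rw [Matrix.trace]
  simp only [Matrix.diag, Matrix.mul_apply]
  refine Finset.sum_congr rfl fun j _ => Finset.sum_congr rfl fun i _ => ?_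
  rw [sq, hB.apply j i]

lemma aux_psd_sum {k m : ℕ} (f : Fin m → Matrix (Fin k) (Fin k) ℝ)
    (h : ∀ i, (f i).PosSemidef) : (∑ i, f i).PosSemidef := by
  refine Finset.sum_induction f _ (fun a b ha hb => ⟨ha.1.add hb.1, fun x => ?_⟩)
    ⟨Matrix.isHermitian_zero, fun x => by simp⟩ (fun i _ => h i)
  simp only [Matrix.add_apply, mul_add, add_mul, Finsupp.sum_add]
  exact add_nonneg (ha.2 x) (hb.2 x)

theorem stmt_19 (k : ℕ) (A : Matrix (Fin k) (Fin k) ℝ) (hA : A.IsSymm)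
    (s₁ s₂ : Polynomial ℝ) (hdiff : s₁ - s₂ = X)
    (hs₁ : ∃ (n : ℕ) (q : Fin n → Polynomial ℝ), s₁ = ∑ i, (q i)^2)
    (hs₂ : ∃ (n : ℕ) (q : Fin n → Polynomial ℝ), s₂ = ∑ i, (q i)^2)
    (htr : (Polynomial.aeval A s₂).trace ≤ 0) :
    A.PosSemidef := by
  obtain ⟨n, q, hq⟩ := hs₂
  -- trace of s₂(A) is a sum of squares of entries
  have htr' : (Polynomial.aeval A s₂).trace
      = ∑ i, ∑ a, ∑ b, (Polynomial.aeval A (q i) a b)^2 := by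
    rw [hq]
    simp only [map_sum, Matrix.trace_sum]
    refine Finset.sum_congr rfl fun i _ => ?_
    rw [map_pow, sq, aux_trace_sq _ (aux_aeval_isSymm hA (q i))]
  have hnn : ∀ i ∈ Finset.univ, (0:ℝ) ≤ ∑ a, ∑ b, (Polynomial.aeval A (q i) a b)^2 :=
    fun i _ => Finset.sum_nonneg fun a _ => Finset.sum_nonneg fun b _ => sq_nonneg _
  have hzero : (Polynomial.aeval A s₂) = 0 := by
    have h0 : (Polynomial.aeval A s₂).trace = 0 :=
      le_antisymm htr (htr' ▸ Finset.sum_nonneg hnn)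
    rw [htr'] at h0
    have hall := (Finset.sum_eq_zero_iff_of_nonneg hnn).mp h0
    have hqz : ∀ i, Polynomial.aeval A (q i) = 0 := by
      intro i
      ext a b
      have h1 := hall i (Finset.mem_univ i)
      have h2 := (Finset.sum_eq_zero_iff_of_nonneg
        (fun a _ => Finset.sum_nonneg fun b _ => sq_nonneg _)).mp h1 a (Finset.mem_univ a)
      have h3 := (Finset.sum_eq_zero_iff_of_nonneg
        (fun b _ => sq_nonneg _)).mp h2 b (Finset.mem_univ b)
      simpa using pow_eq_zero_iff (n := 2) (by norm_num) |>.mp h3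
    rw [hq]
    simp only [map_sum, map_pow]
    exact Finset.sum_eq_zero fun i _ => by rw [hqz i, sq, Matrix.zero_mul]
  -- A = aeval A s₁
  have hAeq : A = Polynomial.aeval A s₁ := by
    have : Polynomial.aeval A (s₁ - s₂) = A := by rw [hdiff, Polynomial.aeval_X]
    rw [map_sub, hzero, sub_zero] at this
    exact this.symm
  obtain ⟨m, r, hr⟩ := hs₁
  rw [hAeq, hr]
  simp only [map_sum, map_pow]
  apply aux_psd_sum
  intro i
  have hsym := aux_aeval_isSymm hA (r i)
  have : (Polynomial.aeval A (r i))^2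
      = (Polynomial.aeval A (r i))ᴴ * (Polynomial.aeval A (r i)) := by
    rw [sq]
    congr 1
    ext a b
    simp only [Matrix.conjTranspose_apply, star_trivial]
    exact hsym.apply b a
  rw [this]
  exact Matrix.posSemidef_conjTranspose_mul_self _
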